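/- There are no nonzero sheaf morphisms from a right half-open interval sheaf to an open or left half-open interval sheaf, nor from a left half-open interval sheaf to an open or right half-open interval sheaf. Precisely: (i) for a ∈ ℝ and b ∈ ℝ ∪ {+∞} with a < b, Hom(k_{[a,b)}, k_{(c,d)}) = 0 for all c ∈ ℝ ∪ {−∞}, d ∈ ℝ ∪ {+∞} with c < d, and Hom(k_{[a,b)}, k_{(c,d]}) = 0 for all c ∈ ℝ ∪ {−∞}, d ∈ ℝ with c < d; (ii) for a ∈ ℝ ∪ {−∞} and b ∈ ℝ with a < b, Hom(k_{(a,b]}, k_{(c,d)}) = 0 for all c ∈ ℝ ∪ {−∞}, d ∈ ℝ ∪ {+∞} with c < d, and Hom(k_{(a,b]}, k_{[c,d)}) = 0 for all c ∈ ℝ, d ∈ ℝ ∪ {+∞} with c < d. -/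

import Mathlib

open CategoryTheory TopologicalSpace Set Topology

noncomputable section

variable (k : Type) [Field k]

/-- The support of the function `s : V ∩ I → k` is closed in `V`. -/
def SuppClosedIn (I V : Set ℝ) (s : ↥(V ∩ I) → k) : Prop :=
  ∀ x ∈ V, x ∈ closure {y : ℝ | ∃ h : y ∈ V ∩ I, s ⟨y, h⟩ ≠ 0} →
    ∃ h : x ∈ V ∩ I, s ⟨x, h⟩ ≠ 0

lemma zero_locConst (I V : Set ℝ) :
    IsLocallyConstant (0 : ↥(V ∩ I) → k) ∧ SuppClosedIn k I V 0 := by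
  constructor
  · exact IsLocallyConstant.const 0
  · intro x _ hx
    exfalso
    have h0 : {y : ℝ | ∃ h : y ∈ V ∩ I, (0 : ↥(V ∩ I) → k) ⟨y, h⟩ ≠ 0} = ∅ := by
      ext y; simp
    rw [h0, closure_empty] at hx
    exact hx

/-- The sections over `V` of the sheaf `k_I`: locally constant functions on `V ∩ I`
whose support is closed in `V`. -/
def secSub (I V : Set ℝ) : Submodule k (↥(V ∩ I) → k) where
  carrier := {s | IsLocallyConstant s ∧ SuppClosedIn k I V s}
  zero_mem' := zero_locConst k I V
  add_mem' := by
    rintro s t ⟨hslc, hscl⟩ ⟨htlc, htcl⟩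
    have hlc : IsLocallyConstant (s + t) := hslc.comp₂ htlc (· + ·)
    refine ⟨hlc, ?_⟩
    intro x hxV hxcl
    have hsub : {y : ℝ | ∃ h : y ∈ V ∩ I, (s + t) ⟨y, h⟩ ≠ 0}
        ⊆ {y : ℝ | ∃ h : y ∈ V ∩ I, s ⟨y, h⟩ ≠ 0}
          ∪ {y : ℝ | ∃ h : y ∈ V ∩ I, t ⟨y, h⟩ ≠ 0} := by
      rintro y ⟨h, hy⟩
      by_cases hsy : s ⟨y, h⟩ = 0
      · refine Or.inr ⟨h, fun h0 => hy ?_⟩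
        show s ⟨y, h⟩ + t ⟨y, h⟩ = 0
        rw [hsy, h0, add_zero]
      · exact Or.inl ⟨h, hsy⟩
    have hxVI : x ∈ V ∩ I := by
      have hcl2 := closure_mono hsub hxcl
      rw [closure_union] at hcl2
      rcases hcl2 with h | h
      · exact (hscl x hxV h).choose
      · exact (htcl x hxV h).choose
    refine ⟨hxVI, ?_⟩
    have hA : IsClosed {y : ↥(V ∩ I) | (s + t) y ≠ 0} := by
      have h1 : IsOpen ((s + t) ⁻¹' {0}) := hlc {0}
      have h2 := h1.isClosed_compl
      have h3 : ((s + t) ⁻¹' {0})ᶜ = {y : ↥(V ∩ I) | (s + t) y ≠ 0} := by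
        ext y; simp
      exact h3 ▸ h2
    have hmem : (⟨x, hxVI⟩ : ↥(V ∩ I)) ∈ closure {y : ↥(V ∩ I) | (s + t) y ≠ 0} := by
      rw [closure_subtype]
      have himg : Subtype.val '' {y : ↥(V ∩ I) | (s + t) y ≠ 0}
          = {y : ℝ | ∃ h : y ∈ V ∩ I, (s + t) ⟨y, h⟩ ≠ 0} := by
        ext y
        constructor
        · rintro ⟨z, hz, rfl⟩; exact ⟨z.2, hz⟩
        · rintro ⟨h, hy⟩; exact ⟨⟨y, h⟩, hy, rfl⟩
      rw [himg]
      exact hxcl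
    have := hA.closure_eq ▸ hmem
    exact this
  smul_mem' := by
    intro c s hs
    rcases hs with ⟨hlc, hcl⟩
    by_cases hc : c = 0
    · subst hc
      rw [zero_smul]
      exact zero_locConst k I V
    · constructor
      · exact hlc.comp (fun a => c • a)
      · intro x hxV hxcl
        have hset : {y : ℝ | ∃ h : y ∈ V ∩ I, (c • s) ⟨y, h⟩ ≠ 0}
            = {y : ℝ | ∃ h : y ∈ V ∩ I, s ⟨y, h⟩ ≠ 0} := by
          ext y
          constructor
          · rintro ⟨h, hy⟩
            refine ⟨h, fun h0 => hy ?_⟩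
            show c • s ⟨y, h⟩ = 0
            rw [h0, smul_zero]
          · rintro ⟨h, hy⟩
            exact ⟨h, by simpa [smul_eq_zero, hc] using hy⟩
        rw [hset] at hxcl
        obtain ⟨h, hy⟩ := hcl x hxV hxcl
        exact ⟨h, by simpa [smul_eq_zero, hc] using hy⟩
/-- Restriction of sections. -/
def resFun (I : Set ℝ) {V W : Set ℝ} (h : W ⊆ V) (s : ↥(V ∩ I) → k) : ↥(W ∩ I) → k :=
  fun y => s ⟨y.1, ⟨h y.2.1, y.2.2⟩⟩

lemma resFun_mem (I : Set ℝ) {V W : Set ℝ} (h : W ⊆ V) (s : ↥(V ∩ I) → k)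
    (hs : s ∈ secSub k I V) : resFun k I h s ∈ secSub k I W := by
  obtain ⟨hlc, hcl⟩ := hs
  constructor
  · exact hlc.comp_continuous (Continuous.subtype_mk continuous_subtype_val _)
  · intro x hxW hxcl
    have hsub : {y : ℝ | ∃ h' : y ∈ W ∩ I, resFun k I h s ⟨y, h'⟩ ≠ 0}
        ⊆ {y : ℝ | ∃ h' : y ∈ V ∩ I, s ⟨y, h'⟩ ≠ 0} := by
      rintro y ⟨h', hy⟩
      exact ⟨⟨h h'.1, h'.2⟩, hy⟩
    obtain ⟨hxVI, hne⟩ := hcl x (h hxW) (closure_mono hsub hxcl)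
    exact ⟨⟨hxW, hxVI.2⟩, hne⟩

/-- Restriction as a linear map. -/
def resLM (I : Set ℝ) {V W : Set ℝ} (h : W ⊆ V) : secSub k I V →ₗ[k] secSub k I W where
  toFun s := ⟨resFun k I h s.1, resFun_mem k I h s.1 s.2⟩
  map_add' s t := rfl
  map_smul' c s := rfl

/-- The presheaf `k_I` on `ℝ`. -/
def intervalPresheaf (I : Set ℝ) : TopCat.Presheaf (ModuleCat.{0} k) (TopCat.of ℝ) where
  obj V := ModuleCat.of k (secSub k I V.unop.1)
  map {V W} f := ModuleCat.ofHom (resLM k I (leOfHom f.unop))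
  map_id V := rfl
  map_comp f g := rfl
theorem intervalPresheaf_isSheaf (I : Set ℝ) : (intervalPresheaf k I).IsSheaf := by
  classical
  rw [TopCat.Presheaf.isSheaf_iff_isSheafUniqueGluing]
  intro ι U sf hcomp
  change (i : ι) → ↥(secSub k I (U i).1) at sf
  -- pointwise compatibility
  have key : ∀ (i j : ι) (x : ℝ) (hxi : x ∈ (U i).1 ∩ I) (hxj : x ∈ (U j).1 ∩ I),
      (sf i).1 ⟨x, hxi⟩ = (sf j).1 ⟨x, hxj⟩ := by
    intro i j x hxi hxj
    have h := hcomp i j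
    have hmem : x ∈ (U i ⊓ U j).1 ∩ I := ⟨⟨hxi.1, hxj.1⟩, hxi.2⟩
    have h2 := congrFun (congrArg Subtype.val h) ⟨x, hmem⟩
    exact h2
  have hmemS : ∀ x : ↥((iSup U : Opens (TopCat.of ℝ)).1 ∩ I), ∃ i, x.1 ∈ U i := by
    intro x
    exact Opens.mem_iSup.mp x.2.1
  set idx : ↥((iSup U : Opens (TopCat.of ℝ)).1 ∩ I) → ι := fun x => (hmemS x).choose with hidxdef
  have hidx : ∀ x, x.1 ∈ U (idx x) := fun x => (hmemS x).choose_spec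
  set s₀ : ↥((iSup U : Opens (TopCat.of ℝ)).1 ∩ I) → k :=
    fun x => (sf (idx x)).1 ⟨x.1, ⟨hidx x, x.2.2⟩⟩ with hs₀def
  have hs₀ : ∀ (x : ↥((iSup U : Opens (TopCat.of ℝ)).1 ∩ I)) (i : ι) (hx : x.1 ∈ U i),
      s₀ x = (sf i).1 ⟨x.1, ⟨hx, x.2.2⟩⟩ :=
    fun x i hx => key (idx x) i x.1 ⟨hidx x, x.2.2⟩ ⟨hx, x.2.2⟩
  have hlc : IsLocallyConstant s₀ := by
    rw [IsLocallyConstant.iff_exists_open]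
    intro x
    obtain ⟨i, hi⟩ := hmemS x
    have hlci : IsLocallyConstant ((sf i).1 : ↥((U i).1 ∩ I) → k) := (sf i).2.1
    obtain ⟨W, hWopen, hpW, hWconst⟩ := hlci.exists_open (⟨x.1, ⟨hi, x.2.2⟩⟩ : ↥((U i).1 ∩ I))
    obtain ⟨O, hOopen, hWO⟩ := isOpen_induced_iff.mp hWopen
    subst hWO
    refine ⟨Subtype.val ⁻¹' (O ∩ (U i).1), (hOopen.inter (U i).2).preimage continuous_subtype_val,
      ⟨hpW, hi⟩, ?_⟩
    intro y hy
    have hyi : y.1 ∈ U i := hy.2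
    rw [hs₀ y i hyi, hs₀ x i hi]
    exact hWconst ⟨y.1, ⟨hyi, y.2.2⟩⟩ hy.1
  have hscl : SuppClosedIn k I (iSup U : Opens (TopCat.of ℝ)).1 s₀ := by
    intro x hxS hxcl
    obtain ⟨i, hi⟩ := Opens.mem_iSup.mp hxS
    have h1 : x ∈ closure ({y : ℝ | ∃ h : y ∈ (iSup U : Opens (TopCat.of ℝ)).1 ∩ I, s₀ ⟨y, h⟩ ≠ 0}
        ∩ (U i).1) := by
      rw [mem_closure_iff] at hxcl ⊢
      intro O hO hxO
      obtain ⟨z, hz⟩ := hxcl (O ∩ (U i).1) (hO.inter (U i).2) ⟨hxO, hi⟩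
      exact ⟨z, hz.1.1, hz.2, hz.1.2⟩
    have hsub : {y : ℝ | ∃ h : y ∈ (iSup U : Opens (TopCat.of ℝ)).1 ∩ I, s₀ ⟨y, h⟩ ≠ 0}
        ∩ (U i).1 ⊆ {y : ℝ | ∃ h : y ∈ (U i).1 ∩ I, (sf i).1 ⟨y, h⟩ ≠ 0} := by
      rintro y ⟨⟨hy, hne⟩, hyi⟩
      refine ⟨⟨hyi, hy.2⟩, ?_⟩
      rw [← hs₀ ⟨y, hy⟩ i hyi]
      exact hne
    obtain ⟨hyUI, hne⟩ := (sf i).2.2 x hi (closure_mono hsub h1)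
    refine ⟨⟨hxS, hyUI.2⟩, ?_⟩
    rw [hs₀ ⟨x, ⟨hxS, hyUI.2⟩⟩ i hyUI.1]
    exact hne
  refine ⟨(⟨s₀, hlc, hscl⟩ : secSub k I (iSup U : Opens (TopCat.of ℝ)).1), ?_, ?_⟩
  · intro i
    apply Subtype.ext
    funext y
    exact hs₀ ⟨y.1, ⟨leOfHom (Opens.leSupr U i) y.2.1, y.2.2⟩⟩ i y.2.1
  · intro t ht
    apply Subtype.ext
    funext x
    have h := ht (idx x)
    have h2 := congrFun (congrArg Subtype.val h) ⟨x.1, ⟨hidx x, x.2.2⟩⟩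
    exact h2

/-- The sheaf `k_I` on `ℝ` for an interval `I`: locally constant functions on `V ∩ I`
whose support is closed in `V`. -/
def intervalSheaf (I : Set ℝ) :
    Sheaf (Opens.grothendieckTopology (TopCat.of ℝ)) (ModuleCat.{0} k) :=
  ⟨intervalPresheaf k I, intervalPresheaf_isSheaf k I⟩
/-- The category of sheaves of `k`-vector spaces on `ℝ`. -/
abbrev RealSheafCat := Sheaf (Opens.grothendieckTopology (TopCat.of ℝ)) (ModuleCat.{0} k)

instance sheafHomSMul (F G : RealSheafCat k) : SMul k (F ⟶ G) :=
  ⟨fun c f => ⟨c • f.hom⟩⟩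

instance sheafHomModule (F G : RealSheafCat k) : Module k (F ⟶ G) :=
  Function.Injective.module k
    { toFun := fun f : F ⟶ G => f.hom
      map_zero' := rfl
      map_add' := fun _ _ => rfl }
    (fun _ _ h => Sheaf.hom_ext h) (fun _ _ => rfl)

instance : HasExt.{1} (RealSheafCat k) := by
  letI := HasDerivedCategory.standard (RealSheafCat k)
  exact hasExt_of_hasDerivedCategory _

/-- The interval `(a, b)` with possibly infinite endpoints. -/
def Ioo' (a b : EReal) : Set ℝ := {x : ℝ | a < (x : EReal) ∧ (x : EReal) < b}

/-- The interval `[a, b)` with a possibly infinite right endpoint. -/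
def Ico' (a : ℝ) (b : EReal) : Set ℝ := {x : ℝ | a ≤ x ∧ (x : EReal) < b}

/-- The interval `(a, b]` with a possibly infinite left endpoint. -/
def Ioc' (a : EReal) (b : ℝ) : Set ℝ := {x : ℝ | a < (x : EReal) ∧ x ≤ b}

/-- Identification of sheaves on the topological space `ℝ` with objects of `RealSheafCat`. -/
def toRS (F : TopCat.Sheaf (ModuleCat.{0} k) (TopCat.of ℝ)) : RealSheafCat k := F


section Main
open Opposite
variable {k : Type} [Field k]

private lemma nat_app' (I J : Set ℝ) (f : intervalSheaf k I ⟶ intervalSheaf k J)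
    {V W : Opens (TopCat.of ℝ)} (h : W ≤ V) (s : secSub k I V.1) :
    f.hom.app (op W) ((intervalPresheaf k I).map (homOfLE h).op s)
      = (intervalPresheaf k J).map (homOfLE h).op (f.hom.app (op V) s) :=
  ConcreteCategory.congr_hom (f.hom.naturality (homOfLE h).op) s

private lemma constancy {A : Set ℝ} (hA : _root_.IsPreconnected A) (g : ↥A → k)
    (hg : IsLocallyConstant g) (x y : ↥A) : g x = g y := by
  haveI : PreconnectedSpace A := Subtype.preconnectedSpace hA
  exact hg.apply_eq_of_isPreconnected isPreconnected_univ (mem_univ x) (mem_univ y)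

private lemma eval_zero_of_not_mem (I J : Set ℝ) (f : intervalSheaf k I ⟶ intervalSheaf k J)
    (V : Opens (TopCat.of ℝ)) (s : secSub k I V.1) (p : ℝ) (hp : p ∈ V.1 ∩ J) (hpI : p ∉ I) :
    (f.hom.app (op V) s).1 ⟨p, hp⟩ = 0 := by
  set T := {y : ℝ | ∃ h : y ∈ V.1 ∩ I, s.1 ⟨y, h⟩ ≠ 0} with hT
  have hpT : p ∉ closure T := by
    intro hcl
    obtain ⟨hm, -⟩ := s.2.2 p hp.1 hcl
    exact hpI hm.2
  set U : Opens (TopCat.of ℝ) := ⟨V.1 ∩ (closure T)ᶜ, V.2.inter isClosed_closure.isOpen_compl⟩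
    with hU
  have hUV : U ≤ V := fun x hx => hx.1
  have hpU : p ∈ U.1 := ⟨hp.1, hpT⟩
  have hres : (intervalPresheaf k I).map (homOfLE hUV).op s = 0 := by
    apply Subtype.ext
    funext y
    by_contra hy
    exact y.2.1.2 (subset_closure ⟨⟨hUV y.2.1, y.2.2⟩, hy⟩)
  have h2 := nat_app' I J f hUV s
  erw [hres, map_zero] at h2
  exact (congrFun (congrArg Subtype.val h2.symm) ⟨p, hpU, hp.2⟩)

end Main
section Main2
open Opposite
variable {k : Type} [Field k]

private lemma main_left (a : ℝ) (b : EReal) (hab : (a : EReal) < b) (J : Set ℝ) (c : EReal)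
    (hJ1 : ∀ x ∈ J, c < (x : EReal))
    (hJ2 : ∀ x ∈ J, ∀ y : ℝ, c < (y : EReal) → y < x → y ∈ J)
    (f : intervalSheaf k (Ico' a b) ⟶ intervalSheaf k J) : f = 0 := by
  have key : ∀ (V : Opens (TopCat.of ℝ)) (s : secSub k (Ico' a b) V.1) (p : ℝ)
      (hp : p ∈ V.1 ∩ J), (f.hom.app (op V) s).1 ⟨p, hp⟩ = 0 := by
    intro V s p hp
    by_cases hpI : p ∈ Ico' a b
    case neg => exact eval_zero_of_not_mem _ J f V s p hp hpI
    obtain ⟨hpa, hpb⟩ := hpI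
    have hpI : p ∈ Ico' a b := ⟨hpa, hpb⟩
    have hcp : c < (p : EReal) := hJ1 p hp.2
    set e : EReal := min c ((a - 1 : ℝ) : EReal) with he
    have ha1a : ((a - 1 : ℝ) : EReal) < ((a : ℝ) : EReal) := by exact_mod_cast sub_one_lt a
    have hea : e < ((a : ℝ) : EReal) := lt_of_le_of_lt (min_le_right _ _) ha1a
    have hec : e ≤ c := min_le_left _ _
    set Wset : Set ℝ := {x : ℝ | e < (x : EReal)} ∩ {x : ℝ | (x : EReal) < b} with hWset
    have hWopen : IsOpen Wset :=
      (isOpen_Ioi.preimage continuous_coe_real_ereal).inter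
        (isOpen_Iio.preimage continuous_coe_real_ereal)
    set W : Opens (TopCat.of ℝ) := ⟨Wset, hWopen⟩ with hW
    have hσmem : (fun _ => (1 : k)) ∈ secSub k (Ico' a b) Wset := by
      refine ⟨IsLocallyConstant.const 1, ?_⟩
      intro x hxW hxcl
      have hsub : {y : ℝ | ∃ h : y ∈ Wset ∩ Ico' a b,
          (fun _ => (1 : k)) (⟨y, h⟩ : ↥(Wset ∩ Ico' a b)) ≠ 0} ⊆ Ici a := by
        rintro y ⟨hy, -⟩; exact hy.2.1
      have hax : x ∈ closure (Ici a) := closure_mono hsub hxcl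
      rw [isClosed_Ici.closure_eq] at hax
      exact ⟨⟨hxW, hax, hxW.2⟩, one_ne_zero⟩
    set σ : secSub k (Ico' a b) Wset := ⟨fun _ => 1, hσmem⟩ with hσ
    set τ := f.hom.app (op W) σ with hτ
    have hWJconn : _root_.IsPreconnected (Wset ∩ J) := by
      apply Set.OrdConnected.isPreconnected
      constructor
      intro x hx y hy z hz
      refine ⟨⟨lt_of_lt_of_le hx.1.1 (EReal.coe_le_coe_iff.mpr hz.1),
        lt_of_le_of_lt (EReal.coe_le_coe_iff.mpr hz.2) hy.1.2⟩, ?_⟩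
      rcases eq_or_lt_of_le hz.2 with h | h
      · rw [h]; exact hy.2
      · exact hJ2 y hy.2 z (lt_of_lt_of_le (hJ1 x hx.2) (EReal.coe_le_coe_iff.mpr hz.1)) h
    have hτ0 : ∀ q : ↥(Wset ∩ J), τ.1 q = 0 := by
      rcases lt_or_ge c ((a : ℝ) : EReal) with hca | hac
      · obtain ⟨q₀, hq₀c, hq₀a⟩ := EReal.exists_between_coe_real hca
        have hq₀a' : q₀ < a := EReal.coe_lt_coe_iff.mp hq₀a
        have hq₀J : q₀ ∈ J := hJ2 p hp.2 q₀ hq₀c (lt_of_lt_of_le hq₀a' hpa)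
        set W'set : Set ℝ := {x : ℝ | e < (x : EReal)} ∩ {x : ℝ | x < a} with hW'set
        have hW'open : IsOpen W'set :=
          (isOpen_Ioi.preimage continuous_coe_real_ereal).inter isOpen_Iio
        set W' : Opens (TopCat.of ℝ) := ⟨W'set, hW'open⟩ with hW'
        have hW'W : W' ≤ W := fun x hx =>
          ⟨hx.1, lt_trans (by exact_mod_cast hx.2) hab⟩
        have hresσ : (intervalPresheaf k (Ico' a b)).map (homOfLE hW'W).op σ = 0 := by
          apply Subtype.ext
          funext y
          exact absurd y.2.2.1 (not_le.mpr y.2.1.2)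
        have h2 := nat_app' (Ico' a b) J f hW'W σ
        erw [hresσ, map_zero] at h2
        have hq₀W' : q₀ ∈ W'set := ⟨lt_of_le_of_lt hec hq₀c, hq₀a'⟩
        have hq₀v : τ.1 ⟨q₀, hW'W hq₀W', hq₀J⟩ = 0 :=
          congrFun (congrArg Subtype.val h2.symm) ⟨q₀, hq₀W', hq₀J⟩
        intro q
        exact (constancy hWJconn τ.1 τ.2.1 q ⟨q₀, hW'W hq₀W', hq₀J⟩).trans hq₀v
      · have hcT : c ≠ ⊤ := ne_top_of_lt hcp
        have hcB : c ≠ ⊥ := ne_bot_of_le_ne_bot (EReal.coe_ne_bot a) hac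
        have hcc : ((c.toReal : ℝ) : EReal) = c := EReal.coe_toReal hcT hcB
        set c' : ℝ := c.toReal
        intro q
        by_contra hq
        have hall : ∀ r : ↥(Wset ∩ J), τ.1 r ≠ 0 := fun r h0 =>
          hq ((constancy hWJconn τ.1 τ.2.1 q r).trans h0)
        have hc'p : c' < p := by
          rw [← EReal.coe_lt_coe_iff, hcc]; exact hcp
        have hsub2 : Ioo c' p ⊆ {y : ℝ | ∃ h : y ∈ Wset ∩ J, τ.1 ⟨y, h⟩ ≠ 0} := by
          intro y hy
          have hcy : c < (y : EReal) := by rw [← hcc]; exact_mod_cast hy.1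
          have hyJ : y ∈ J := hJ2 p hp.2 y hcy hy.2
          have hyW : y ∈ Wset :=
            ⟨lt_of_le_of_lt hec hcy, lt_trans (EReal.coe_lt_coe_iff.mpr hy.2) hpb⟩
          exact ⟨⟨hyW, hyJ⟩, hall _⟩
        have hcl : c' ∈ closure {y : ℝ | ∃ h : y ∈ Wset ∩ J, τ.1 ⟨y, h⟩ ≠ 0} := by
          apply closure_mono hsub2
          rw [closure_Ioo (ne_of_lt hc'p)]
          exact ⟨le_refl _, le_of_lt hc'p⟩
        have hc'W : c' ∈ Wset := by
          refine ⟨?_, ?_⟩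
          · show e < ((c' : ℝ) : EReal)
            rw [hcc]
            exact lt_of_le_of_lt (min_le_right _ _) (lt_of_lt_of_le ha1a hac)
          · show ((c' : ℝ) : EReal) < b
            rw [hcc]; exact lt_trans hcp hpb
        obtain ⟨hm, -⟩ := τ.2.2 c' hc'W hcl
        have hlt : c < ((c' : ℝ) : EReal) := hJ1 c' hm.2
        rw [hcc] at hlt
        exact lt_irrefl _ hlt
    have hVo : IsOpen (show Set ℝ from V.1) := V.2
    obtain ⟨ε, hε, hball⟩ := Metric.isOpen_iff.mp hVo p hp.1
    set Uset : Set ℝ := Wset ∩ Ioo (p - ε) (p + ε) with hUset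
    have hUopen : IsOpen Uset := hWopen.inter isOpen_Ioo
    set U : Opens (TopCat.of ℝ) := ⟨Uset, hUopen⟩ with hU
    have hUV : U ≤ V := fun x hx => hball (by rw [Real.ball_eq_Ioo]; exact hx.2)
    have hUW : U ≤ W := fun x hx => hx.1
    have hpW : p ∈ Wset := ⟨lt_of_lt_of_le hea (EReal.coe_le_coe_iff.mpr hpa), hpb⟩
    have hpU : p ∈ Uset := ⟨hpW, by constructor <;> linarith⟩
    have hUIconn : _root_.IsPreconnected (Uset ∩ Ico' a b) := by
      apply Set.OrdConnected.isPreconnected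
      constructor
      rintro x ⟨⟨⟨hx1, hx2⟩, hx3, hx3'⟩, hx4, hx5⟩ y ⟨⟨⟨hy1, hy2⟩, hy3, hy3'⟩, hy4, hy5⟩ z ⟨hz1, hz2⟩
      refine ⟨⟨⟨?_, ?_⟩, ?_, ?_⟩, ?_, ?_⟩
      · exact lt_of_lt_of_le hx1 (EReal.coe_le_coe_iff.mpr hz1)
      · exact lt_of_le_of_lt (EReal.coe_le_coe_iff.mpr hz2) hy2
      · exact lt_of_lt_of_le hx3 hz1
      · exact lt_of_le_of_lt hz2 hy3'
      · exact le_trans hx4 hz1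
      · exact lt_of_le_of_lt (EReal.coe_le_coe_iff.mpr hz2) hy5
    set s' := (intervalPresheaf k (Ico' a b)).map (homOfLE hUV).op s with hs'
    set μ := s.1 ⟨p, hp.1, hpI⟩ with hμ
    have hpUI : p ∈ Uset ∩ Ico' a b := ⟨hpU, hpI⟩
    have hs'const : s' = μ • ((intervalPresheaf k (Ico' a b)).map (homOfLE hUW).op σ) := by
      apply Subtype.ext
      funext y
      have h1 : s'.1 y = s'.1 ⟨p, hpUI⟩ := constancy hUIconn s'.1 s'.2.1 y ⟨p, hpUI⟩
      show s'.1 y = μ • (1 : k)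
      rw [smul_eq_mul, mul_one]
      exact h1
    have hfinal := nat_app' (Ico' a b) J f hUV s
    have h4 := nat_app' (Ico' a b) J f hUW σ
    have h5 : f.hom.app (op U) s' = μ • ((intervalPresheaf k J).map (homOfLE hUW).op τ) := by
      erw [hs'const, map_smul, h4]
      rfl
    have h6 := hfinal.symm.trans h5
    have h7 : (f.hom.app (op V) s).1 ⟨p, hp⟩ = μ • τ.1 ⟨p, hpW, hp.2⟩ :=
      congrFun (congrArg Subtype.val h6) ⟨p, hpU, hp.2⟩
    rw [h7, hτ0 ⟨p, hpW, hp.2⟩, smul_zero]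
  apply Sheaf.hom_ext
  apply NatTrans.ext
  funext Vop
  apply ModuleCat.hom_ext
  apply LinearMap.ext
  intro s
  apply Subtype.ext
  funext q
  exact key Vop.unop s q.1 q.2

end Main2
section Main3
open Opposite
variable {k : Type} [Field k]

private lemma main_right (a : EReal) (b : ℝ) (hab : a < (b : EReal)) (J : Set ℝ) (d : EReal)
    (hJ1 : ∀ x ∈ J, (x : EReal) < d)
    (hJ2 : ∀ x ∈ J, ∀ y : ℝ, x < y → (y : EReal) < d → y ∈ J)
    (f : intervalSheaf k (Ioc' a b) ⟶ intervalSheaf k J) : f = 0 := by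
  have key : ∀ (V : Opens (TopCat.of ℝ)) (s : secSub k (Ioc' a b) V.1) (p : ℝ)
      (hp : p ∈ V.1 ∩ J), (f.hom.app (op V) s).1 ⟨p, hp⟩ = 0 := by
    intro V s p hp
    by_cases hpI : p ∈ Ioc' a b
    case neg => exact eval_zero_of_not_mem _ J f V s p hp hpI
    obtain ⟨hpa, hpb⟩ := hpI
    have hpI : p ∈ Ioc' a b := ⟨hpa, hpb⟩
    have hpd : (p : EReal) < d := hJ1 p hp.2
    set E : EReal := max d ((b + 1 : ℝ) : EReal) with hE
    have hb1 : ((b : ℝ) : EReal) < ((b + 1 : ℝ) : EReal) := by exact_mod_cast lt_add_one b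
    have hbE : ((b : ℝ) : EReal) < E := lt_of_lt_of_le hb1 (le_max_right _ _)
    have hdE : d ≤ E := le_max_left _ _
    set Wset : Set ℝ := {x : ℝ | a < (x : EReal)} ∩ {x : ℝ | (x : EReal) < E} with hWset
    have hWopen : IsOpen Wset :=
      (isOpen_Ioi.preimage continuous_coe_real_ereal).inter
        (isOpen_Iio.preimage continuous_coe_real_ereal)
    set W : Opens (TopCat.of ℝ) := ⟨Wset, hWopen⟩ with hW
    have hσmem : (fun _ => (1 : k)) ∈ secSub k (Ioc' a b) Wset := by
      refine ⟨IsLocallyConstant.const 1, ?_⟩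
      intro x hxW hxcl
      have hsub : {y : ℝ | ∃ h : y ∈ Wset ∩ Ioc' a b,
          (fun _ => (1 : k)) (⟨y, h⟩ : ↥(Wset ∩ Ioc' a b)) ≠ 0} ⊆ Iic b := by
        rintro y ⟨hy, -⟩; exact hy.2.2
      have hax : x ∈ closure (Iic b) := closure_mono hsub hxcl
      rw [isClosed_Iic.closure_eq] at hax
      exact ⟨⟨hxW, hxW.1, hax⟩, one_ne_zero⟩
    set σ : secSub k (Ioc' a b) Wset := ⟨fun _ => 1, hσmem⟩ with hσ
    set τ := f.hom.app (op W) σ with hτ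
    have hWJconn : _root_.IsPreconnected (Wset ∩ J) := by
      apply Set.OrdConnected.isPreconnected
      constructor
      intro x hx y hy z hz
      refine ⟨⟨lt_of_lt_of_le hx.1.1 (EReal.coe_le_coe_iff.mpr hz.1),
        lt_of_le_of_lt (EReal.coe_le_coe_iff.mpr hz.2) hy.1.2⟩, ?_⟩
      rcases eq_or_lt_of_le hz.1 with h | h
      · rw [← h]; exact hx.2
      · exact hJ2 x hx.2 z h (lt_of_le_of_lt (EReal.coe_le_coe_iff.mpr hz.2) (hJ1 y hy.2))
    have hτ0 : ∀ q : ↥(Wset ∩ J), τ.1 q = 0 := by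
      rcases lt_or_ge ((b : ℝ) : EReal) d with hbd | hdb
      · obtain ⟨q₀, hbq₀, hq₀d⟩ := EReal.exists_between_coe_real hbd
        have hbq₀' : b < q₀ := EReal.coe_lt_coe_iff.mp hbq₀
        have hq₀J : q₀ ∈ J := hJ2 p hp.2 q₀ (lt_of_le_of_lt hpb hbq₀') hq₀d
        set W'set : Set ℝ := {x : ℝ | b < x} ∩ {x : ℝ | (x : EReal) < E} with hW'set
        have hW'open : IsOpen W'set :=
          isOpen_Ioi.inter (isOpen_Iio.preimage continuous_coe_real_ereal)
        set W' : Opens (TopCat.of ℝ) := ⟨W'set, hW'open⟩ with hW'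
        have hW'W : W' ≤ W := fun x hx =>
          ⟨lt_trans hab (by exact_mod_cast hx.1), hx.2⟩
        have hresσ : (intervalPresheaf k (Ioc' a b)).map (homOfLE hW'W).op σ = 0 := by
          apply Subtype.ext
          funext y
          exact absurd y.2.2.2 (not_le.mpr y.2.1.1)
        have h2 := nat_app' (Ioc' a b) J f hW'W σ
        erw [hresσ, map_zero] at h2
        have hq₀W' : q₀ ∈ W'set := ⟨hbq₀', lt_of_lt_of_le hq₀d hdE⟩
        have hq₀v : τ.1 ⟨q₀, hW'W hq₀W', hq₀J⟩ = 0 :=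
          congrFun (congrArg Subtype.val h2.symm) ⟨q₀, hq₀W', hq₀J⟩
        intro q
        exact (constancy hWJconn τ.1 τ.2.1 q ⟨q₀, hW'W hq₀W', hq₀J⟩).trans hq₀v
      · have hdT : d ≠ ⊤ := ne_top_of_le_ne_top (EReal.coe_ne_top b) hdb
        have hdB : d ≠ ⊥ := bot_lt_iff_ne_bot.mp (lt_trans (EReal.bot_lt_coe p) hpd)
        have hcc : ((d.toReal : ℝ) : EReal) = d := EReal.coe_toReal hdT hdB
        set d' : ℝ := d.toReal
        intro q
        by_contra hq
        have hall : ∀ r : ↥(Wset ∩ J), τ.1 r ≠ 0 := fun r h0 =>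
          hq ((constancy hWJconn τ.1 τ.2.1 q r).trans h0)
        have hpd' : p < d' := by
          rw [← EReal.coe_lt_coe_iff, hcc]; exact hpd
        have hsub2 : Ioo p d' ⊆ {y : ℝ | ∃ h : y ∈ Wset ∩ J, τ.1 ⟨y, h⟩ ≠ 0} := by
          intro y hy
          have hyd : (y : EReal) < d := by rw [← hcc]; exact_mod_cast hy.2
          have hyJ : y ∈ J := hJ2 p hp.2 y hy.1 hyd
          have hyW : y ∈ Wset :=
            ⟨lt_trans hpa (EReal.coe_lt_coe_iff.mpr hy.1), lt_of_lt_of_le hyd hdE⟩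
          exact ⟨⟨hyW, hyJ⟩, hall _⟩
        have hcl : d' ∈ closure {y : ℝ | ∃ h : y ∈ Wset ∩ J, τ.1 ⟨y, h⟩ ≠ 0} := by
          apply closure_mono hsub2
          rw [closure_Ioo (ne_of_lt hpd')]
          exact ⟨le_of_lt hpd', le_refl _⟩
        have hd'W : d' ∈ Wset := by
          refine ⟨?_, ?_⟩
          · show a < ((d' : ℝ) : EReal)
            rw [hcc]
            exact lt_trans hpa hpd
          · show ((d' : ℝ) : EReal) < E
            rw [hcc]
            exact lt_of_le_of_lt hdb hbE
        obtain ⟨hm, -⟩ := τ.2.2 d' hd'W hcl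
        have hlt : ((d' : ℝ) : EReal) < d := hJ1 d' hm.2
        rw [hcc] at hlt
        exact lt_irrefl _ hlt
    have hVo : IsOpen (show Set ℝ from V.1) := V.2
    obtain ⟨ε, hε, hball⟩ := Metric.isOpen_iff.mp hVo p hp.1
    set Uset : Set ℝ := Wset ∩ Ioo (p - ε) (p + ε) with hUset
    have hUopen : IsOpen Uset := hWopen.inter isOpen_Ioo
    set U : Opens (TopCat.of ℝ) := ⟨Uset, hUopen⟩ with hU
    have hUV : U ≤ V := fun x hx => hball (by rw [Real.ball_eq_Ioo]; exact hx.2)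
    have hUW : U ≤ W := fun x hx => hx.1
    have hpW : p ∈ Wset := ⟨hpa, lt_of_le_of_lt (EReal.coe_le_coe_iff.mpr hpb) hbE⟩
    have hpU : p ∈ Uset := ⟨hpW, by constructor <;> linarith⟩
    have hUIconn : _root_.IsPreconnected (Uset ∩ Ioc' a b) := by
      apply Set.OrdConnected.isPreconnected
      constructor
      rintro x ⟨⟨⟨hx1, hx2⟩, hx3, hx3'⟩, hx4, hx5⟩ y ⟨⟨⟨hy1, hy2⟩, hy3, hy3'⟩, hy4, hy5⟩ z ⟨hz1, hz2⟩
      refine ⟨⟨⟨?_, ?_⟩, ?_, ?_⟩, ?_, ?_⟩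
      · exact lt_of_lt_of_le hx1 (EReal.coe_le_coe_iff.mpr hz1)
      · exact lt_of_le_of_lt (EReal.coe_le_coe_iff.mpr hz2) hy2
      · exact lt_of_lt_of_le hx3 hz1
      · exact lt_of_le_of_lt hz2 hy3'
      · exact lt_of_lt_of_le hx4 (EReal.coe_le_coe_iff.mpr hz1)
      · exact le_trans hz2 hy5
    set s' := (intervalPresheaf k (Ioc' a b)).map (homOfLE hUV).op s with hs'
    set μ := s.1 ⟨p, hp.1, hpI⟩ with hμ
    have hpUI : p ∈ Uset ∩ Ioc' a b := ⟨hpU, hpI⟩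
    have hs'const : s' = μ • ((intervalPresheaf k (Ioc' a b)).map (homOfLE hUW).op σ) := by
      apply Subtype.ext
      funext y
      have h1 : s'.1 y = s'.1 ⟨p, hpUI⟩ := constancy hUIconn s'.1 s'.2.1 y ⟨p, hpUI⟩
      show s'.1 y = μ • (1 : k)
      rw [smul_eq_mul, mul_one]
      exact h1
    have hfinal := nat_app' (Ioc' a b) J f hUV s
    have h4 := nat_app' (Ioc' a b) J f hUW σ
    have h5 : f.hom.app (op U) s' = μ • ((intervalPresheaf k J).map (homOfLE hUW).op τ) := by
      erw [hs'const, map_smul, h4]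
      rfl
    have h6 := hfinal.symm.trans h5
    have h7 : (f.hom.app (op V) s).1 ⟨p, hp⟩ = μ • τ.1 ⟨p, hpW, hp.2⟩ :=
      congrFun (congrArg Subtype.val h6) ⟨p, hpU, hp.2⟩
    rw [h7, hτ0 ⟨p, hpW, hp.2⟩, smul_zero]
  apply Sheaf.hom_ext
  apply NatTrans.ext
  funext Vop
  apply ModuleCat.hom_ext
  apply LinearMap.ext
  intro s
  apply Subtype.ext
  funext q
  exact key Vop.unop s q.1 q.2

end Main3
/-- There are no nonzero sheaf morphisms from a right half-open interval sheaf
to an open or left half-open interval sheaf, nor from a left half-open interval sheaf to an open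
or right half-open interval sheaf. -/
theorem hom_halfopen_vanishing (k : Type) [Field k] :
    (∀ (a : ℝ) (b : EReal), (a : EReal) < b → ∀ (c d : EReal), c < d →
      ∀ f : intervalSheaf k (Ico' a b) ⟶ intervalSheaf k (Ioo' c d), f = 0) ∧
    (∀ (a : ℝ) (b : EReal), (a : EReal) < b → ∀ (c : EReal) (d : ℝ), c < (d : EReal) →
      ∀ f : intervalSheaf k (Ico' a b) ⟶ intervalSheaf k (Ioc' c d), f = 0) ∧
    (∀ (a : EReal) (b : ℝ), a < (b : EReal) → ∀ (c d : EReal), c < d →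
      ∀ f : intervalSheaf k (Ioc' a b) ⟶ intervalSheaf k (Ioo' c d), f = 0) ∧
    (∀ (a : EReal) (b : ℝ), a < (b : EReal) → ∀ (c : ℝ) (d : EReal), (c : EReal) < d →
      ∀ f : intervalSheaf k (Ioc' a b) ⟶ intervalSheaf k (Ico' c d), f = 0) := by
  refine ⟨?_, ?_, ?_, ?_⟩
  · intro a b hab c d _ f
    exact main_left a b hab (Ioo' c d) c (fun x hx => hx.1)
      (fun x hx y hcy hyx => ⟨hcy, lt_trans (EReal.coe_lt_coe_iff.mpr hyx) hx.2⟩) f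
  · intro a b hab c d _ f
    exact main_left a b hab (Ioc' c d) c (fun x hx => hx.1)
      (fun x hx y hcy hyx => ⟨hcy, le_trans (le_of_lt hyx) hx.2⟩) f
  · intro a b hab c d _ f
    exact main_right a b hab (Ioo' c d) d (fun x hx => hx.2)
      (fun x hx y hxy hyd => ⟨lt_trans hx.1 (EReal.coe_lt_coe_iff.mpr hxy), hyd⟩) f
  · intro a b hab c d _ f
    exact main_right a b hab (Ico' c d) d (fun x hx => hx.2)
      (fun x hx y hxy hyd => ⟨le_trans hx.1 (le_of_lt hxy), hyd⟩) f

end
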